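/- For the path graph L_n on n vertices (n ≥ 4), f(L_n) = -f(L_{n-3}). -/

import Mathlib

open Finset

/- `f(G) = Σ_C (-1)^{|C|}` over all independent vertex sets `C` of `G`. -/
open Classical in
noncomputable def fgraph {V : Type*} [Fintype V] (G : SimpleGraph V) : ℤ :=
  ∑ s ∈ Finset.univ.filter (fun s : Finset V => ∀ u ∈ s, ∀ v ∈ s, ¬ G.Adj u v),
    (-1 : ℤ) ^ s.card

/- `f` of the induced subgraph of `G` on the vertex set `A`. -/
open Classical in
noncomputable def fdel {V : Type*} [Fintype V] (G : SimpleGraph V) (A : Set V) : ℤ :=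
  fgraph (G.induce A)

open SimpleGraph in
lemma path_adj_val {m k : ℕ} {u v : Fin m} {u' v' : Fin k}
    (hu : (u : ℕ) = u') (hv : (v : ℕ) = v') :
    (pathGraph m).Adj u v ↔ (pathGraph k).Adj u' v' := by
  simp [pathGraph_adj, hu, hv]

open Classical SimpleGraph in
lemma path_step (n : ℕ) :
    fgraph (pathGraph (n+2)) = fgraph (pathGraph (n+1)) - fgraph (pathGraph n) := by
  unfold fgraph
  set emb1 : Fin (n+1) ↪ Fin (n+2) := ⟨Fin.castSucc, Fin.castSucc_injective _⟩ with hemb1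
  set emb2 : Fin n ↪ Fin (n+2) :=
    ⟨fun x => x.castSucc.castSucc, (Fin.castSucc_injective _).comp (Fin.castSucc_injective _)⟩ with hemb2
  have hsplit :
      ∑ s ∈ Finset.univ.filter
          (fun s : Finset (Fin (n+2)) => ∀ u ∈ s, ∀ v ∈ s, ¬ (pathGraph (n+2)).Adj u v),
          (-1 : ℤ) ^ s.card
        = (∑ s ∈ (Finset.univ.filter
            (fun s : Finset (Fin (n+2)) => ∀ u ∈ s, ∀ v ∈ s, ¬ (pathGraph (n+2)).Adj u v)).filter
            (fun s => Fin.last (n+1) ∉ s), (-1:ℤ)^s.card)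
        + (∑ s ∈ (Finset.univ.filter
            (fun s : Finset (Fin (n+2)) => ∀ u ∈ s, ∀ v ∈ s, ¬ (pathGraph (n+2)).Adj u v)).filter
            (fun s => Fin.last (n+1) ∈ s), (-1:ℤ)^s.card) := by
    rw [← Finset.sum_filter_add_sum_filter_not (Finset.univ.filter
      (fun s : Finset (Fin (n+2)) => ∀ u ∈ s, ∀ v ∈ s, ¬ (pathGraph (n+2)).Adj u v))
      (fun s => Fin.last (n+1) ∉ s)]
    simp
  have hA :
      (∑ s ∈ Finset.univ.filter
          (fun s : Finset (Fin (n+1)) => ∀ u ∈ s, ∀ v ∈ s, ¬ (pathGraph (n+1)).Adj u v),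
          (-1:ℤ)^s.card)
        = ∑ s ∈ (Finset.univ.filter
            (fun s : Finset (Fin (n+2)) => ∀ u ∈ s, ∀ v ∈ s, ¬ (pathGraph (n+2)).Adj u v)).filter
            (fun s => Fin.last (n+1) ∉ s), (-1:ℤ)^s.card := by
    refine Finset.sum_nbij' (fun s => s.map emb1)
      (fun s => s.preimage emb1 (emb1.injective.injOn))
      ?_ ?_ ?_ ?_ ?_
    · intro s hs
      simp only [Finset.mem_filter, Finset.mem_univ, true_and] at hs ⊢
      constructor
      · intro u hu v hv
        rw [hemb1] at hu hv
        simp only [Finset.mem_map, Function.Embedding.coeFn_mk] at hu hv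
        obtain ⟨u', hu', rfl⟩ := hu
        obtain ⟨v', hv', rfl⟩ := hv
        rw [path_adj_val (k := n+1) (u' := u') (v' := v') (by simp) (by simp)]
        exact hs u' hu' v' hv'
      · rw [hemb1]
        simp only [Finset.mem_map, Function.Embedding.coeFn_mk, not_exists]
        rintro x ⟨-, h⟩
        have := congrArg Fin.val h
        simp only [Fin.coe_castSucc, Fin.val_last] at this
        have := x.isLt; omega
    · intro s hs
      simp only [Finset.mem_filter, Finset.mem_univ, true_and] at hs ⊢
      obtain ⟨hind, -⟩ := hs
      intro u hu v hv
      simp only [Finset.mem_preimage] at hu hv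
      rw [path_adj_val (k := n+2) (u' := emb1 u) (v' := emb1 v)
        (by rw [hemb1]; simp) (by rw [hemb1]; simp)]
      exact hind _ hu _ hv
    · intro s _
      ext a
      simp only [Finset.mem_preimage]
      exact Finset.mem_map' _
    · intro s hs
      simp only [Finset.mem_filter, Finset.mem_univ, true_and] at hs
      ext a
      simp only [Finset.mem_map, Finset.mem_preimage]
      constructor
      · rintro ⟨b, hb, rfl⟩; simpa using hb
      · intro ha
        have hlt : (a : ℕ) < n + 1 := by
          rcases Nat.lt_or_ge (a : ℕ) (n+1) with h | h
          · exact h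
          · exfalso
            have : a = Fin.last (n+1) := by
              apply Fin.ext; simp only [Fin.val_last]; have := a.isLt; omega
            exact hs.2 (this ▸ ha)
        have heq : emb1 ⟨(a : ℕ), hlt⟩ = a := by
          rw [hemb1]; apply Fin.ext; simp
        exact ⟨⟨(a : ℕ), hlt⟩, by rw [heq]; exact ha, heq⟩
    · intro s _
      rw [Finset.card_map]
  have hB :
      (∑ s ∈ Finset.univ.filter
          (fun s : Finset (Fin n) => ∀ u ∈ s, ∀ v ∈ s, ¬ (pathGraph n).Adj u v),
          -((-1:ℤ)^s.card))
        = ∑ s ∈ (Finset.univ.filter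
            (fun s : Finset (Fin (n+2)) => ∀ u ∈ s, ∀ v ∈ s, ¬ (pathGraph (n+2)).Adj u v)).filter
            (fun s => Fin.last (n+1) ∈ s), (-1:ℤ)^s.card := by
    have hlastne : ∀ (t : Finset (Fin n)), Fin.last (n+1) ∉ t.map emb2 := by
      intro t
      rw [hemb2]
      simp only [Finset.mem_map, Function.Embedding.coeFn_mk, not_exists]
      rintro x ⟨-, h⟩
      have := congrArg Fin.val h
      simp only [Fin.coe_castSucc, Fin.val_last] at this
      have := x.isLt; omega
    refine Finset.sum_nbij'
      (fun s => insert (Fin.last (n+1)) (s.map emb2))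
      (fun s => (s.erase (Fin.last (n+1))).preimage emb2 (emb2.injective.injOn))
      ?_ ?_ ?_ ?_ ?_
    · intro s hs
      simp only [Finset.mem_filter, Finset.mem_univ, true_and] at hs ⊢
      refine ⟨?_, Finset.mem_insert_self _ _⟩
      intro u hu v hv
      rw [hemb2] at hu hv
      simp only [Finset.mem_insert, Finset.mem_map, Function.Embedding.coeFn_mk] at hu hv
      rcases hu with rfl | ⟨x, hx, rfl⟩ <;> rcases hv with rfl | ⟨y, hy, rfl⟩
      · simp
      · rw [pathGraph_adj]
        simp only [Fin.val_last, Fin.coe_castSucc]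
        have := y.isLt; omega
      · rw [pathGraph_adj]
        simp only [Fin.val_last, Fin.coe_castSucc]
        have := x.isLt; omega
      · rw [path_adj_val (k := n) (u' := x) (v' := y) (by simp) (by simp)]
        exact hs x hx y hy
    · intro s hs
      simp only [Finset.mem_filter, Finset.mem_univ, true_and] at hs ⊢
      obtain ⟨hind, -⟩ := hs
      intro u hu v hv
      simp only [Finset.mem_preimage, Finset.mem_erase] at hu hv
      rw [path_adj_val (k := n+2) (u' := emb2 u) (v' := emb2 v)
        (by rw [hemb2]; simp) (by rw [hemb2]; simp)]
      exact hind _ hu.2 _ hv.2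
    · intro s _
      ext a
      simp only [Finset.mem_preimage, Finset.mem_erase]
      constructor
      · rintro ⟨hne, hmem⟩
        rcases Finset.mem_insert.mp hmem with h' | h'
        · exact absurd h' hne
        · exact (Finset.mem_map' _).mp h'
      · intro ha
        refine ⟨?_, Finset.mem_insert_of_mem ((Finset.mem_map' _).mpr ha)⟩
        intro hc
        exact hlastne s (hc ▸ Finset.mem_map_of_mem emb2 ha)
    · intro s hs
      simp only [Finset.mem_filter, Finset.mem_univ, true_and] at hs
      obtain ⟨hind, hlast⟩ := hs
      ext a
      simp only [Finset.mem_insert, Finset.mem_map, Finset.mem_preimage, Finset.mem_erase]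
      constructor
      · rintro (rfl | ⟨b, ⟨-, hbmem⟩, rfl⟩)
        · exact hlast
        · exact hbmem
      · intro ha
        by_cases h : a = Fin.last (n+1)
        · exact Or.inl h
        · right
          have hlt : (a : ℕ) < n := by
            have h1 : (a : ℕ) < n + 2 := a.isLt
            have h2 : (a : ℕ) ≠ n + 1 := fun hc => h (Fin.ext (by simp [hc]))
            have h3 : (a : ℕ) ≠ n := by
              intro hc
              apply hind a ha (Fin.last (n+1)) hlast
              rw [pathGraph_adj]
              left
              simp [hc]
            omega
          have heq : emb2 ⟨(a : ℕ), hlt⟩ = a := by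
            rw [hemb2]; apply Fin.ext; simp
          exact ⟨⟨(a : ℕ), hlt⟩, ⟨by rw [heq]; exact h, by rw [heq]; exact ha⟩, heq⟩
    · intro s _
      rw [Finset.card_insert_of_notMem (hlastne s), Finset.card_map, pow_succ]
      ring
  have key :
      ∑ s ∈ Finset.univ.filter
          (fun s : Finset (Fin (n+2)) => ∀ u ∈ s, ∀ v ∈ s, ¬ (pathGraph (n+2)).Adj u v),
          (-1 : ℤ) ^ s.card
        = (∑ s ∈ Finset.univ.filter
            (fun s : Finset (Fin (n+1)) => ∀ u ∈ s, ∀ v ∈ s, ¬ (pathGraph (n+1)).Adj u v),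
            (-1:ℤ)^s.card)
        - (∑ s ∈ Finset.univ.filter
            (fun s : Finset (Fin n) => ∀ u ∈ s, ∀ v ∈ s, ¬ (pathGraph n).Adj u v),
            (-1:ℤ)^s.card) := by
    rw [hsplit, ← hA, ← hB, Finset.sum_neg_distrib]
    ring
  convert key using 3 <;> exact Finset.filter_congr_decidable _ _ _

/-- For the path graph `L_n` with `n ≥ 4`, `f(L_n) = -f(L_{n-3})`. -/
theorem path_recursion (n : ℕ) (hn : 4 ≤ n) :
    fgraph (SimpleGraph.pathGraph n) = - fgraph (SimpleGraph.pathGraph (n - 3)) := by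
  obtain ⟨m, rfl⟩ := Nat.exists_eq_add_of_le hn
  have h1 := path_step (m + 2)
  have h2 := path_step (m + 1)
  have e2 : 4 + m - 3 = m + 1 := by omega
  rw [e2, show 4 + m = (m+2)+2 from by omega, h1]
  have e3 : fgraph (SimpleGraph.pathGraph (m+2+1)) = fgraph (SimpleGraph.pathGraph (m+1+2)) := by
    norm_num
  rw [e3, h2]
  have e4 : fgraph (SimpleGraph.pathGraph (m+1+1)) = fgraph (SimpleGraph.pathGraph (m+2)) := by
    norm_num
  rw [e4]
  ring
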